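/- arXiv:1801.08639 — 3 statements merged into one kernel-verified Lean document; each statement's English description precedes it below -/
import Mathlib

section
/- Let r ≥ 1 and λ̃ ≥ 1 be integers, λ = rλ̃ − r + 1, and let v ∈ ℝ^λ be the ΣΔ condensation vector. For any positive integer p, set m = pλ, let V = I_p ⊗ v ∈ ℝ^{p×m}, Ṽ = (9/(8‖v‖₂√p))·V, and let D ∈ ℝ^{m×m} be the first-order difference matrix. Then ‖ṼD^r‖_{∞→2} ≤ (8r)^{r+1}·λ^{−r+1/2}. -/
open scoped BigOperators
noncomputable section

/-- The ΣΔ condensation vector: the `j`-th entry (0-indexed) is the coefficient of `z^j`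
in the polynomial `(1 + z + ⋯ + z^(lamt-1))^r`. -/
def sdVec (r lamt : ℕ) {lam : ℕ} : Fin lam → ℝ :=
  fun j => ((∑ t ∈ Finset.range lamt, (Polynomial.X : Polynomial ℝ) ^ t) ^ r).coeff (j : ℕ)

/-- Block-diagonal matrix `I_p ⊗ v` with `p` copies of the row vector `v` on the diagonal. -/
def kronRow (p : ℕ) {lam : ℕ} (v : Fin lam → ℝ) : Matrix (Fin p) (Fin (p * lam)) ℝ :=
  Matrix.of fun i j =>
    if (j : ℕ) / lam = (i : ℕ) then
      (if h2 : (j : ℕ) % lam < lam then v ⟨(j : ℕ) % lam, h2⟩ else 0)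
    else 0

/-- The `m×m` first-order difference matrix. -/
def diffMat (m : ℕ) : Matrix (Fin m) (Fin m) ℝ :=
  Matrix.of fun i j =>
    if (i : ℕ) = (j : ℕ) then 1 else if (i : ℕ) = (j : ℕ) + 1 then -1 else 0

/-- `ℓ¹` norm of a real vector. -/
def norm1 {n : ℕ} (x : Fin n → ℝ) : ℝ := ∑ j, |x j|

/-- Euclidean norm of a real vector. -/
def norm2 {n : ℕ} (x : Fin n → ℝ) : ℝ := Real.sqrt (∑ j, (x j) ^ 2)

/-- `ℓ∞` norm of a real vector. -/
def normInf {n : ℕ} (x : Fin n → ℝ) : ℝ := ⨆ j, |x j|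

/-- The `∞ → 2` operator norm `‖M‖_{∞→2} = sup {‖Mx‖₂ : ‖x‖_∞ ≤ 1}`. -/
def opNormInf2 {p m : ℕ} (M : Matrix (Fin p) (Fin m) ℝ) : ℝ :=
  sSup {c : ℝ | ∃ x : Fin m → ℝ, normInf x ≤ 1 ∧ c = norm2 (M.mulVec x)}

/-! ### Auxiliary machinery -/

/-- Coefficient of a polynomial at an integer index (zero for negative indices). -/
def zc (f : Polynomial ℝ) (d : ℤ) : ℝ :=
  if 0 ≤ d then f.coeff d.toNat else 0

lemma zc_neg {f : Polynomial ℝ} {d : ℤ} (h : d < 0) : zc f d = 0 := by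
  simp [zc, not_le.mpr h]

lemma zc_coe (f : Polynomial ℝ) (n : ℕ) : zc f (n : ℤ) = f.coeff n := by
  simp [zc]

lemma zc_eq_zero_of_lt {f : Polynomial ℝ} {d : ℤ} (h : (f.natDegree : ℤ) < d) :
    zc f d = 0 := by
  have hd : 0 ≤ d := le_trans (Int.ofNat_nonneg _) h.le
  rw [zc, if_pos hd]
  apply Polynomial.coeff_eq_zero_of_natDegree_lt
  omega

lemma zc_X_sub_one_mul (f : Polynomial ℝ) (d : ℤ) :
    zc ((Polynomial.X - 1) * f) d = zc f (d - 1) - zc f d := by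
  rcases lt_trichotomy d 0 with h | h | h
  · rw [zc_neg h, zc_neg (show d - 1 < 0 by omega), zc_neg h]; ring
  · subst h
    rw [show (0:ℤ) - 1 = (-1:ℤ) by ring, zc_neg (show (-1:ℤ) < 0 by norm_num)]
    simp only [zc, le_refl, if_pos, Int.toNat_zero, zero_sub]
    rw [sub_mul, one_mul, Polynomial.coeff_sub, Polynomial.mul_coeff_zero]
    simp
  · obtain ⟨n, rfl⟩ : ∃ n : ℕ, d = (n : ℤ) + 1 := ⟨(d - 1).toNat, by omega⟩
    have h1 : ((n : ℤ) + 1) = ((n + 1 : ℕ) : ℤ) := by push_cast; ring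
    rw [h1, zc_coe, show ((n+1:ℕ):ℤ) - 1 = (n:ℤ) by push_cast; ring, zc_coe, zc_coe]
    rw [sub_mul, one_mul, Polynomial.coeff_sub, Polynomial.coeff_X_mul]

lemma row_step (m : ℕ) (f : Polynomial ℝ) (a : ℤ) (hz : zc f ((m:ℤ) - a) = 0) (j : Fin m) :
    (∑ k : Fin m, zc f ((k:ℤ) - a) * diffMat m k j)
      = zc ((Polynomial.X - 1) * f) ((j:ℤ) - (a - 1)) := by
  rw [zc_X_sub_one_mul, show (j:ℤ) - (a-1) - 1 = (j:ℤ) - a by ring,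
    show (j:ℤ) - (a-1) = (j:ℤ) + 1 - a by ring]
  have hsplit : ∀ k : Fin m, zc f ((k:ℤ) - a) * diffMat m k j
      = (if k = j then zc f ((j:ℤ) - a) else 0)
        - (if (k:ℕ) = (j:ℕ) + 1 then zc f ((j:ℤ) + 1 - a) else 0) := by
    intro k
    simp only [diffMat, Matrix.of_apply]
    by_cases h1 : (k:ℕ) = (j:ℕ)
    · have hkj : k = j := Fin.ext h1
      subst hkj
      rw [if_pos rfl, if_pos rfl, if_neg (by omega)]
      ring
    · rw [if_neg h1, if_neg (fun h : k = j => h1 (by rw [h]))]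
      by_cases h2 : (k:ℕ) = (j:ℕ) + 1
      · have hk : (k:ℤ) = (j:ℤ) + 1 := by exact_mod_cast h2
        rw [if_pos h2, if_pos h2, hk]
        ring
      · rw [if_neg h2, if_neg h2]
        ring
  rw [Finset.sum_congr rfl (fun k _ => hsplit k), Finset.sum_sub_distrib]
  congr 1
  · rw [Finset.sum_ite_eq' Finset.univ j, if_pos (Finset.mem_univ _)]
  · by_cases hjm : (j:ℕ) + 1 < m
    · have : ∀ k : Fin m, ((k:ℕ) = (j:ℕ) + 1) ↔ (k = (⟨(j:ℕ)+1, hjm⟩ : Fin m)) := by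
        intro k; constructor
        · intro h; exact Fin.ext h
        · intro h; rw [h]
      calc (∑ k : Fin m, if (k:ℕ) = (j:ℕ) + 1 then zc f ((j:ℤ) + 1 - a) else 0)
          = ∑ k : Fin m, if k = (⟨(j:ℕ)+1, hjm⟩ : Fin m) then zc f ((j:ℤ) + 1 - a) else 0 := by
            exact Finset.sum_congr rfl (fun k _ => by rw [if_congr (this k) rfl rfl])
        _ = zc f ((j:ℤ) + 1 - a) := by
            rw [Finset.sum_ite_eq' Finset.univ, if_pos (Finset.mem_univ _)]
    · have hjm' : (j:ℕ) + 1 = m := by have := j.isLt; omega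
      have h0 : ∀ k : Fin m, ¬ ((k:ℕ) = (j:ℕ) + 1) := fun k h => by
        have := k.isLt; omega
      rw [Finset.sum_congr rfl (fun k _ => if_neg (h0 k)), Finset.sum_const_zero]
      have hjz : ((j:ℕ):ℤ) + 1 = (m:ℤ) := by exact_mod_cast hjm'
      rw [show ((j:ℕ):ℤ) + 1 - a = (m:ℤ) - a by rw [← hjz], hz]

/-- The geometric-sum polynomial `1 + X + ⋯ + X^(lamt-1)`. -/
def qp (lamt : ℕ) : Polynomial ℝ :=
  ∑ t ∈ Finset.range lamt, Polynomial.X ^ t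

lemma qp_coeff (lamt n : ℕ) : (qp lamt).coeff n = if n < lamt then 1 else 0 := by
  rw [qp, Polynomial.finset_sum_coeff]
  simp only [Polynomial.coeff_X_pow]
  rw [Finset.sum_ite_eq (Finset.range lamt) n (fun _ => (1:ℝ))]
  simp [Finset.mem_range]

lemma qp_natDegree (lamt : ℕ) : (qp lamt).natDegree ≤ lamt - 1 := by
  rw [Polynomial.natDegree_le_iff_coeff_eq_zero]
  intro N hN
  rw [qp_coeff, if_neg (by omega)]

lemma qp_pow_coeff_nonneg (r lamt n : ℕ) : 0 ≤ ((qp lamt) ^ r).coeff n := by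
  induction r generalizing n with
  | zero => simp [Polynomial.coeff_one]; positivity
  | succ r ih =>
    rw [pow_succ, Polynomial.coeff_mul]
    apply Finset.sum_nonneg
    intro x _
    have : (0:ℝ) ≤ (qp lamt).coeff x.2 := by rw [qp_coeff]; positivity
    exact mul_nonneg (ih x.1) this

lemma qp_pow_natDegree (r l : ℕ) : ((qp (l+1)) ^ r).natDegree ≤ r * l := by
  refine le_trans Polynomial.natDegree_pow_le ?_
  have := qp_natDegree (l+1)
  simp at this
  exact Nat.mul_le_mul_left r this

lemma Ventry (r l lam : ℕ) (hlam : lam = r * l + 1) (p : ℕ) (i : Fin p) (j : Fin (p * lam)) :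
    kronRow p (sdVec r (l+1) (lam := lam)) i j
      = zc ((qp (l+1)) ^ r) (((j:ℕ):ℤ) - ((i:ℕ):ℤ) * (lam:ℤ)) := by
  have hlampos : 0 < lam := by omega
  rw [kronRow, Matrix.of_apply]
  by_cases hij : (j:ℕ) / lam = (i:ℕ)
  · rw [if_pos hij, dif_pos (Nat.mod_lt _ hlampos)]
    have h1 : lam * (i:ℕ) + (j:ℕ) % lam = (j:ℕ) := by
      rw [← hij]; exact Nat.div_add_mod _ _
    have hcomm : lam * (i:ℕ) = (i:ℕ) * lam := Nat.mul_comm _ _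
    have hle : (i:ℕ) * lam ≤ (j:ℕ) := by omega
    have hmod : (j:ℕ) % lam = (j:ℕ) - (i:ℕ) * lam := by omega
    have hidx : ((j:ℕ):ℤ) - ((i:ℕ):ℤ) * (lam:ℤ) = (((j:ℕ) - (i:ℕ) * lam : ℕ) : ℤ) := by
      push_cast [hle]; ring
    rw [hidx, zc_coe, sdVec]
    simp only [Fin.val_mk, qp]
    rw [hmod]
  · rw [if_neg hij]
    by_cases hlt : (j:ℕ) < (i:ℕ) * lam
    · rw [zc_neg]
      have : ((j:ℕ):ℤ) < ((i:ℕ):ℤ) * (lam:ℤ) := by exact_mod_cast hlt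
      omega
    · push_neg at hlt
      have hi1 : (i:ℕ) < (j:ℕ) / lam := by
        have : (i:ℕ) ≤ (j:ℕ) / lam := (Nat.le_div_iff_mul_le hlampos).mpr hlt
        omega
      have h2 : ((i:ℕ) + 1) * lam ≤ (j:ℕ) := by
        calc ((i:ℕ) + 1) * lam ≤ ((j:ℕ) / lam) * lam := Nat.mul_le_mul_right _ hi1
          _ ≤ (j:ℕ) := Nat.div_mul_le_self _ _
      rw [zc_eq_zero_of_lt]
      have hdeg := qp_pow_natDegree r l
      have h2' : ((i:ℕ):ℤ) * lam + lam ≤ ((j:ℕ):ℤ) := by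
        have : (((i:ℕ) + 1) * lam : ℤ) ≤ ((j:ℕ):ℤ) := by exact_mod_cast h2
        linarith [this]
      have : ((((qp (l+1)) ^ r).natDegree : ℕ) : ℤ) ≤ (r * l : ℤ) := by exact_mod_cast hdeg
      omega

lemma Xsub1_pow_natDegree (s : ℕ) : ((Polynomial.X - 1 : Polynomial ℝ) ^ s).natDegree ≤ s := by
  refine le_trans Polynomial.natDegree_pow_le ?_
  have h1 : (Polynomial.X - 1 : Polynomial ℝ).natDegree = 1 := by
    simpa using Polynomial.natDegree_X_sub_C (1:ℝ)
  rw [h1, mul_one]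

lemma rowVD (r l lam : ℕ) (hlam : lam = r * l + 1) (p : ℕ) (i : Fin p) (s : ℕ) (j : Fin (p * lam)) :
    (kronRow p (sdVec r (l+1) (lam := lam)) * (diffMat (p * lam)) ^ s) i j
      = zc ((Polynomial.X - 1) ^ s * (qp (l+1)) ^ r)
           (((j:ℕ):ℤ) - (((i:ℕ):ℤ) * (lam:ℤ) - (s:ℤ))) := by
  induction s generalizing j with
  | zero =>
    rw [pow_zero, Matrix.mul_one, pow_zero, one_mul, Ventry r l lam hlam]
    norm_num
  | succ s ih =>
    rw [pow_succ, ← Matrix.mul_assoc, Matrix.mul_apply]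
    rw [Finset.sum_congr rfl (fun k _ => by rw [ih k])]
    have hdeg : (((Polynomial.X - 1 : Polynomial ℝ) ^ s * (qp (l+1)) ^ r).natDegree : ℤ)
        ≤ (s : ℤ) + (r : ℤ) * (l : ℤ) := by
      have := le_trans Polynomial.natDegree_mul_le
        (add_le_add (Xsub1_pow_natDegree s) (qp_pow_natDegree r l))
      exact_mod_cast this
    have hz : zc ((Polynomial.X - 1) ^ s * (qp (l+1)) ^ r)
        (((p * lam : ℕ):ℤ) - (((i:ℕ):ℤ) * (lam:ℤ) - (s:ℤ))) = 0 := by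
      apply zc_eq_zero_of_lt
      have hip : ((i:ℕ) + 1) * lam ≤ p * lam := Nat.mul_le_mul_right _ i.isLt
      have hip' : (((i:ℕ):ℤ) + 1) * (lam:ℤ) ≤ ((p * lam : ℕ):ℤ) := by exact_mod_cast hip
      have hll : (lam:ℤ) = (r:ℤ) * (l:ℤ) + 1 := by exact_mod_cast hlam
      nlinarith [hdeg]
    have := row_step (p * lam) ((Polynomial.X - 1) ^ s * (qp (l+1)) ^ r)
      (((i:ℕ):ℤ) * (lam:ℤ) - (s:ℤ)) hz j
    rw [this]
    rw [show (Polynomial.X - 1 : Polynomial ℝ) * ((Polynomial.X - 1) ^ s * (qp (l+1)) ^ r)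
        = (Polynomial.X - 1) ^ (s+1) * (qp (l+1)) ^ r by ring]
    congr 1
    push_cast
    ring

lemma fact_P (r l : ℕ) :
    (Polynomial.X - 1 : Polynomial ℝ) ^ r * (qp (l+1)) ^ r
      = ((Polynomial.X : Polynomial ℝ) ^ (l+1) - 1) ^ r := by
  rw [← mul_pow]
  congr 1
  rw [mul_comm, qp]
  exact geom_sum_mul _ _

lemma Pbound (r l : ℕ) (d : ℤ) :
    |zc (((Polynomial.X : Polynomial ℝ) ^ (l+1) - 1) ^ r) d|
      ≤ ∑ s ∈ Finset.range (r+1), (r.choose s : ℝ)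
          * (if d = (((l+1) * s : ℕ) : ℤ) then 1 else 0) := by
  have hnn : (0:ℝ) ≤ ∑ s ∈ Finset.range (r+1), (r.choose s : ℝ)
      * (if d = (((l+1) * s : ℕ) : ℤ) then 1 else 0) := by
    apply Finset.sum_nonneg
    intro s _
    apply mul_nonneg (Nat.cast_nonneg _)
    split <;> norm_num
  by_cases hd : 0 ≤ d
  · rw [zc, if_pos hd]
    rw [sub_pow, Polynomial.finset_sum_coeff]
    have hterm : ∀ s, (((-1 : Polynomial ℝ)) ^ (s + r) * ((Polynomial.X : Polynomial ℝ) ^ (l+1)) ^ s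
          * (1 : Polynomial ℝ) ^ (r - s) * ((r.choose s : ℕ) : Polynomial ℝ)).coeff d.toNat
        = (-1:ℝ) ^ (s + r) * (r.choose s : ℝ) * (if d.toNat = (l+1) * s then 1 else 0) := by
      intro s
      have heq : ((-1 : Polynomial ℝ)) ^ (s + r) * ((Polynomial.X : Polynomial ℝ) ^ (l+1)) ^ s
            * (1 : Polynomial ℝ) ^ (r - s) * ((r.choose s : ℕ) : Polynomial ℝ)
          = Polynomial.C ((-1:ℝ) ^ (s + r) * (r.choose s : ℝ))
              * (Polynomial.X : Polynomial ℝ) ^ ((l+1) * s) := by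
        rw [one_pow, ← pow_mul, map_mul, map_pow, map_neg, Polynomial.C_1,
          Polynomial.C_eq_natCast]
        ring
      rw [heq, Polynomial.coeff_C_mul, Polynomial.coeff_X_pow]
    rw [Finset.sum_congr rfl (fun s _ => hterm s)]
    refine le_trans (Finset.abs_sum_le_sum_abs _ _) ?_
    apply Finset.sum_le_sum
    intro s _
    rw [abs_mul, abs_mul, abs_pow, abs_neg, abs_one, one_pow, one_mul,
      Nat.abs_cast]
    have : (if d.toNat = (l+1) * s then (1:ℝ) else 0)
        = (if d = (((l+1) * s : ℕ) : ℤ) then (1:ℝ) else 0) := by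
      refine if_congr ?_ rfl rfl
      omega
    have habs : |if d.toNat = (l+1) * s then (1:ℝ) else 0|
        = if d.toNat = (l+1) * s then (1:ℝ) else 0 := abs_of_nonneg (by split <;> norm_num)
    rw [habs, this]
  · rw [zc_neg (by omega), abs_zero]
    exact hnn

lemma sum_ind_le_one (m : ℕ) (c : ℤ) :
    ∑ j : Fin m, (if ((j:ℕ):ℤ) = c then (1:ℝ) else 0) ≤ 1 := by
  rw [Finset.sum_boole]
  have h : (Finset.filter (fun j : Fin m => ((j:ℕ):ℤ) = c) Finset.univ).card ≤ 1 := by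
    apply Finset.card_le_one.mpr
    intro a ha b hb
    simp only [Finset.mem_filter] at ha hb
    apply Fin.ext
    have : ((a:ℕ):ℤ) = ((b:ℕ):ℤ) := by rw [ha.2, hb.2]
    exact_mod_cast this
  exact_mod_cast h

lemma rowL1 (r l lam : ℕ) (hlam : lam = r * l + 1) (p : ℕ) (i : Fin p) :
    ∑ j : Fin (p * lam),
        |(kronRow p (sdVec r (l+1) (lam := lam)) * (diffMat (p * lam)) ^ r) i j|
      ≤ (2:ℝ) ^ r := by
  have h1 : ∀ j : Fin (p * lam),
      |(kronRow p (sdVec r (l+1) (lam := lam)) * (diffMat (p * lam)) ^ r) i j|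
        ≤ ∑ s ∈ Finset.range (r+1), (r.choose s : ℝ)
            * (if ((j:ℕ):ℤ) = (((l+1) * s : ℕ) : ℤ) + (((i:ℕ):ℤ) * (lam:ℤ) - (r:ℤ)) then 1 else 0) := by
    intro j
    rw [rowVD r l lam hlam p i r j, fact_P]
    refine le_trans (Pbound r l _) ?_
    apply Finset.sum_le_sum
    intro s _
    have : (((j:ℕ):ℤ) - (((i:ℕ):ℤ) * (lam:ℤ) - (r:ℤ)) = (((l+1) * s : ℕ) : ℤ))
        ↔ (((j:ℕ):ℤ) = (((l+1) * s : ℕ) : ℤ) + (((i:ℕ):ℤ) * (lam:ℤ) - (r:ℤ))) := sub_eq_iff_eq_add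
    rw [if_congr this rfl rfl]
  calc ∑ j : Fin (p * lam), |(kronRow p (sdVec r (l+1) (lam := lam)) * (diffMat (p * lam)) ^ r) i j|
      ≤ ∑ j : Fin (p * lam), ∑ s ∈ Finset.range (r+1), (r.choose s : ℝ)
          * (if ((j:ℕ):ℤ) = (((l+1) * s : ℕ) : ℤ) + (((i:ℕ):ℤ) * (lam:ℤ) - (r:ℤ)) then 1 else 0) :=
        Finset.sum_le_sum (fun j _ => h1 j)
    _ = ∑ s ∈ Finset.range (r+1), ∑ j : Fin (p * lam), (r.choose s : ℝ)
          * (if ((j:ℕ):ℤ) = (((l+1) * s : ℕ) : ℤ) + (((i:ℕ):ℤ) * (lam:ℤ) - (r:ℤ)) then 1 else 0) :=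
        Finset.sum_comm
    _ ≤ ∑ s ∈ Finset.range (r+1), (r.choose s : ℝ) := by
        apply Finset.sum_le_sum
        intro s _
        rw [← Finset.mul_sum]
        calc (r.choose s : ℝ) * ∑ j : Fin (p * lam),
              (if ((j:ℕ):ℤ) = (((l+1) * s : ℕ) : ℤ) + (((i:ℕ):ℤ) * (lam:ℤ) - (r:ℤ)) then 1 else 0)
            ≤ (r.choose s : ℝ) * 1 :=
              mul_le_mul_of_nonneg_left (sum_ind_le_one _ _) (Nat.cast_nonneg _)
          _ = (r.choose s : ℝ) := mul_one _
    _ = (2:ℝ) ^ r := by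
        have h2 : ((∑ s ∈ Finset.range (r+1), r.choose s : ℕ) : ℝ) = ((2^r : ℕ) : ℝ) :=
          congrArg Nat.cast (Nat.sum_range_choose r)
        push_cast at h2
        exact h2

lemma sdVec_sum (r l lam : ℕ) (hlam : lam = r * l + 1) :
    ∑ j : Fin lam, sdVec r (l+1) (lam := lam) j = ((l:ℝ) + 1) ^ r := by
  have hq : ∀ j : Fin lam, sdVec r (l+1) (lam := lam) j = ((qp (l+1)) ^ r).coeff (j:ℕ) := by
    intro j; rfl
  rw [Finset.sum_congr rfl (fun j _ => hq j), Fin.sum_univ_eq_sum_range]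
  have hdeg : ((qp (l+1)) ^ r).natDegree < lam := by
    have := qp_pow_natDegree r l; omega
  have := Polynomial.eval_eq_sum_range' hdeg (1:ℝ)
  simp only [one_pow, mul_one] at this
  rw [← this, Polynomial.eval_pow]
  have : Polynomial.eval (1:ℝ) (qp (l+1)) = (l:ℝ) + 1 := by
    rw [qp, Polynomial.eval_finset_sum]
    simp
  rw [this]

lemma norm2_lower (r l lam : ℕ) (hlam : lam = r * l + 1) :
    ((l:ℝ) + 1) ^ r ≤ norm2 (sdVec r (l+1) (lam := lam)) * Real.sqrt lam := by
  set v := sdVec r (l+1) (lam := lam)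
  have hA : (0:ℝ) ≤ ∑ j, (v j) ^ 2 := Finset.sum_nonneg fun j _ => sq_nonneg _
  rw [norm2, ← Real.sqrt_mul hA]
  rw [Real.le_sqrt (by positivity) (by positivity)]
  have hcs := Finset.sum_mul_sq_le_sq_mul_sq Finset.univ v (fun _ => (1:ℝ))
  simp only [mul_one, one_pow] at hcs
  rw [Finset.sum_const, Finset.card_univ, Fintype.card_fin, nsmul_eq_mul, mul_one] at hcs
  rw [← sdVec_sum r l lam hlam]
  exact hcs

lemma final_arith (r l lam : ℕ) (hr : 1 ≤ r) (hlam : lam = r * l + 1)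
    (a : ℝ) (ha : 0 < a) (hKey : ((l:ℝ) + 1) ^ r ≤ a * Real.sqrt lam) :
    9 * 2 ^ r / (8 * a) ≤ (8 * (r:ℝ)) ^ (r + 1) * (lam:ℝ) ^ (-(r:ℝ) + 1/2) := by
  have hlampos : (0:ℝ) < lam := by
    have : 1 ≤ lam := by omega
    exact_mod_cast Nat.lt_of_lt_of_le Nat.zero_lt_one this
  have hs : (0:ℝ) < Real.sqrt lam := Real.sqrt_pos.mpr hlampos
  have hrpow : (lam:ℝ) ^ (-(r:ℝ) + 1/2) = Real.sqrt lam / (lam:ℝ) ^ r := by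
    rw [Real.rpow_add hlampos, Real.rpow_neg hlampos.le, Real.rpow_natCast,
      ← Real.sqrt_eq_rpow]
    ring
  rw [hrpow, ← mul_div_assoc, div_le_div_iff₀ (by positivity) (by positivity)]
  have hr1 : (1:ℝ) ≤ (r:ℝ) := by exact_mod_cast hr
  have h1 : (lam:ℝ) ^ r ≤ (r:ℝ) ^ r * ((l:ℝ) + 1) ^ r := by
    rw [← mul_pow]
    apply pow_le_pow_left₀ (by positivity)
    have hmn : (lam:ℕ) ≤ r * (l + 1) := by
      have : r * (l+1) = r * l + r := by ring
      omega
    have := (Nat.cast_le (α := ℝ)).mpr hmn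
    push_cast at this ⊢
    linarith
  have hbig : 9 * (2:ℝ)^r * (r:ℝ)^r ≤ 8^(r+2) * (r:ℝ)^(r+1) := by
    have h2 : (9:ℝ) * 2^r ≤ 8^(r+2) := by
      have : (2:ℝ)^r ≤ 8^r := pow_le_pow_left₀ (by norm_num) (by norm_num) r
      have h8 : (8:ℝ)^(r+2) = 64 * 8^r := by ring
      nlinarith [pow_pos (show (0:ℝ) < 2 by norm_num) r]
    have h3 : (r:ℝ)^r ≤ (r:ℝ)^(r+1) := pow_le_pow_right₀ hr1 (by omega)
    calc 9 * (2:ℝ)^r * (r:ℝ)^r ≤ 8^(r+2) * (r:ℝ)^r :=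
          mul_le_mul_of_nonneg_right h2 (by positivity)
      _ ≤ 8^(r+2) * (r:ℝ)^(r+1) := mul_le_mul_of_nonneg_left h3 (by positivity)
  calc 9 * (2:ℝ)^r * (lam:ℝ)^r
      ≤ 9 * 2^r * ((r:ℝ)^r * ((l:ℝ)+1)^r) := by
        apply mul_le_mul_of_nonneg_left h1 (by positivity)
    _ = (9 * 2^r * (r:ℝ)^r) * ((l:ℝ)+1)^r := by ring
    _ ≤ (9 * 2^r * (r:ℝ)^r) * (a * Real.sqrt lam) := by
        apply mul_le_mul_of_nonneg_left hKey (by positivity)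
    _ ≤ (8^(r+2) * (r:ℝ)^(r+1)) * (a * Real.sqrt lam) := by
        apply mul_le_mul_of_nonneg_right hbig (by positivity)
    _ = (8 * (r:ℝ)) ^ (r+1) * Real.sqrt lam * (8 * a) := by
        rw [mul_pow]; ring

/-- with `v` the ΣΔ condensation vector, `V = I_p ⊗ v`,
`Ṽ = (9/(8‖v‖₂√p))·V` and `D` the first-order difference matrix,
`‖ṼD^r‖_{∞→2} ≤ (8r)^{r+1} · λ^{-r+1/2}`. -/
theorem stmt1 (r lamt : ℕ) (hr : 1 ≤ r) (hlamt : 1 ≤ lamt)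
    (lam : ℕ) (hlam : lam = r * lamt - r + 1) (p : ℕ) (hp : 0 < p)
    (v : Fin lam → ℝ) (hv : v = sdVec r lamt)
    (V : Matrix (Fin p) (Fin (p * lam)) ℝ) (hV : V = kronRow p v)
    (Vt : Matrix (Fin p) (Fin (p * lam)) ℝ)
    (hVt : Vt = (9 / (8 * norm2 v * Real.sqrt p)) • V) :
    opNormInf2 (Vt * (diffMat (p * lam)) ^ r)
      ≤ (8 * (r : ℝ)) ^ (r + 1) * (lam : ℝ) ^ (-(r : ℝ) + 1 / 2) := by
  obtain ⟨l, rfl⟩ : ∃ l, lamt = l + 1 := ⟨lamt - 1, by omega⟩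
  have hlam' : lam = r * l + 1 := by
    have h : r * (l + 1) = r * l + r := by ring
    omega
  subst hv; subst hV; subst hVt
  set w : Fin lam → ℝ := sdVec r (l+1) (lam := lam) with hw
  set N : Matrix (Fin p) (Fin (p * lam)) ℝ := kronRow p w * (diffMat (p * lam)) ^ r with hN
  set c : ℝ := 9 / (8 * norm2 w * Real.sqrt p) with hc
  have hKey := norm2_lower r l lam hlam'
  have h1r : (1:ℝ) ≤ ((l:ℝ) + 1) ^ r := by
    calc (1:ℝ) = 1 ^ r := (one_pow r).symm
      _ ≤ ((l:ℝ) + 1) ^ r := pow_le_pow_left₀ (by norm_num) (by norm_num) r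
  have hvpos : 0 < norm2 w := by
    by_contra h
    push_neg at h
    nlinarith [Real.sqrt_nonneg (lam:ℝ), hKey, h1r]
  have hsp : (0:ℝ) < Real.sqrt p := Real.sqrt_pos.mpr (by exact_mod_cast hp)
  have hc0 : 0 < c := by
    rw [hc]; positivity
  have hMe : (9 / (8 * norm2 w * Real.sqrt p)) • kronRow p w * (diffMat (p * lam)) ^ r
      = c • N := by
    rw [hN, hc, Matrix.smul_mul]
  rw [hMe]
  apply Real.sSup_le
  · rintro x ⟨y, hy, rfl⟩
    rw [normInf] at hy
    have hyb : ∀ j, |y j| ≤ 1 := by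
      intro j
      refine le_trans ?_ hy
      exact le_ciSup (f := fun j => |y j|) (Set.Finite.bddAbove (Set.finite_range _)) j
    have hi : ∀ i, |((c • N).mulVec y) i| ≤ c * 2 ^ r := by
      intro i
      have : ((c • N).mulVec y) i = ∑ j, c * N i j * y j := by
        simp [Matrix.mulVec, dotProduct, Matrix.smul_apply, smul_eq_mul]
      rw [this]
      calc |∑ j, c * N i j * y j| ≤ ∑ j, |c * N i j * y j| :=
            Finset.abs_sum_le_sum_abs _ _
        _ ≤ ∑ j, c * |N i j| := by
            apply Finset.sum_le_sum
            intro j _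
            rw [abs_mul, abs_mul, abs_of_nonneg hc0.le, mul_assoc]
            apply mul_le_mul_of_nonneg_left _ hc0.le
            calc |N i j| * |y j| ≤ |N i j| * 1 :=
                  mul_le_mul_of_nonneg_left (hyb j) (abs_nonneg _)
              _ = |N i j| := mul_one _
        _ = c * ∑ j, |N i j| := by rw [Finset.mul_sum]
        _ ≤ c * 2 ^ r := mul_le_mul_of_nonneg_left (rowL1 r l lam hlam' p i) hc0.le
    have hsum : ∑ i, (((c • N).mulVec y) i) ^ 2 ≤ (p:ℝ) * (c * 2 ^ r) ^ 2 := by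
      calc ∑ i, (((c • N).mulVec y) i) ^ 2 ≤ ∑ _i : Fin p, (c * 2 ^ r) ^ 2 := by
            apply Finset.sum_le_sum
            intro i _
            rw [← sq_abs]
            exact pow_le_pow_left₀ (abs_nonneg _) (hi i) 2
        _ = (p:ℝ) * (c * 2 ^ r) ^ 2 := by
            rw [Finset.sum_const, Finset.card_univ, Fintype.card_fin, nsmul_eq_mul]
    calc norm2 ((c • N).mulVec y) ≤ Real.sqrt ((p:ℝ) * (c * 2 ^ r) ^ 2) := by
          rw [norm2]
          exact Real.sqrt_le_sqrt hsum
      _ = Real.sqrt p * (c * 2 ^ r) := by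
          rw [Real.sqrt_mul (Nat.cast_nonneg _), Real.sqrt_sq (by positivity)]
      _ = 9 * 2 ^ r / (8 * norm2 w) := by
          rw [hc]
          field_simp
      _ ≤ (8 * (r : ℝ)) ^ (r + 1) * (lam : ℝ) ^ (-(r : ℝ) + 1 / 2) :=
          final_arith r l lam hr hlam' (norm2 w) hvpos hKey
  · apply mul_nonneg (by positivity)
    exact Real.rpow_nonneg (Nat.cast_nonneg _) _
end
end

section
/- Let r ≥ 1 and λ̃ ≥ 1 be integers, λ = rλ̃ − r + 1, and let v ∈ ℝ^λ be the ΣΔ condensation vector. Then ‖v‖₂ ≥ λ^{r−1/2}·r^{−r}. -/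
open scoped BigOperators
noncomputable section

/-- the ΣΔ condensation vector `v ∈ ℝ^λ`, `λ = rλ̃ - r + 1`, satisfies
`‖v‖₂ ≥ λ^(r - 1/2) · r^(-r)`. -/
theorem stmt2 (r lamt : ℕ) (hr : 1 ≤ r) (hlamt : 1 ≤ lamt)
    (lam : ℕ) (hlam : lam = r * lamt - r + 1)
    (v : Fin lam → ℝ) (hv : v = sdVec r lamt) :
    norm2 v ≥ (lam : ℝ) ^ ((r : ℝ) - 1 / 2) * (r : ℝ) ^ (-(r : ℝ)) := by
  set P : Polynomial ℝ := (∑ t ∈ Finset.range lamt, (Polynomial.X : Polynomial ℝ) ^ t) ^ r with hP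
  -- degree bound
  have hdeg : P.natDegree < lam := by
    have h1 : (∑ t ∈ Finset.range lamt, (Polynomial.X : Polynomial ℝ) ^ t).natDegree ≤ lamt - 1 := by
      refine Polynomial.natDegree_sum_le_of_forall_le _ _ ?_
      intro t ht
      simpa using Nat.le_sub_one_of_lt (Finset.mem_range.mp ht)
    have h2 : P.natDegree ≤ r * (lamt - 1) :=
      Polynomial.natDegree_pow_le.trans (Nat.mul_le_mul_left r h1)
    have : r * (lamt - 1) < lam := by
      have := Nat.mul_le_mul_left r hlamt
      rw [hlam, Nat.mul_sub]
      omega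
    omega
  -- sum of coefficients
  have hsum : ∑ j : Fin lam, v j = (lamt : ℝ) ^ r := by
    subst hv
    have := Polynomial.eval_eq_sum_range' hdeg (1 : ℝ)
    simp only [one_pow, mul_one] at this
    rw [show (∑ j : Fin lam, sdVec r lamt j) = ∑ i ∈ Finset.range lam, P.coeff i from
      Fin.sum_univ_eq_sum_range _ lam, ← this, hP]
    simp [Polynomial.eval_pow, Polynomial.eval_finset_sum]
  have hlampos : (0 : ℝ) < lam := by
    have : 1 ≤ lam := by omega
    exact_mod_cast this
  have hrpos : (0 : ℝ) < r := by exact_mod_cast hr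
  -- Cauchy–Schwarz
  have hcs : ((lamt : ℝ) ^ r) ^ 2 ≤ (lam : ℝ) * ∑ j, (v j) ^ 2 := by
    rw [← hsum]
    have := sq_sum_le_card_mul_sum_sq (s := (Finset.univ : Finset (Fin lam))) (f := v)
    simpa using this
  have hsq : (lamt : ℝ) ^ (2 * r) / lam ≤ ∑ j, (v j) ^ 2 := by
    rw [div_le_iff₀ hlampos]
    calc (lamt : ℝ) ^ (2 * r) = ((lamt : ℝ) ^ r) ^ 2 := by ring
      _ ≤ (lam : ℝ) * ∑ j, (v j) ^ 2 := hcs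
      _ = (∑ j, (v j) ^ 2) * lam := by ring
  -- rewrite RHS
  have hRHS : (lam : ℝ) ^ ((r : ℝ) - 1 / 2) * (r : ℝ) ^ (-(r : ℝ))
      = (lam : ℝ) ^ r / (Real.sqrt lam * (r : ℝ) ^ r) := by
    rw [Real.rpow_sub hlampos, Real.rpow_neg hrpos.le, Real.rpow_natCast, Real.rpow_natCast,
      Real.sqrt_eq_rpow]
    field_simp
  rw [ge_iff_le, hRHS, norm2]
  -- key numeric inequality: lam^r ≤ (r*lamt)^r
  have hkey : (lam : ℝ) ^ r ≤ ((r : ℝ) * lamt) ^ r := by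
    apply pow_le_pow_left₀ hlampos.le
    have hge : r ≤ r * lamt := Nat.le_mul_of_pos_right r hlamt
    have : (lam : ℕ) ≤ r * lamt := by omega
    exact_mod_cast this
  rw [div_le_iff₀ (by positivity)]
  have h1 : (lamt : ℝ) ^ r / Real.sqrt lam ≤ Real.sqrt (∑ j, (v j) ^ 2) := by
    rw [div_le_iff₀ (Real.sqrt_pos.mpr hlampos), ← Real.sqrt_sq (by positivity : (0:ℝ) ≤ (lamt:ℝ)^r),
      ← Real.sqrt_mul (by positivity)]
    apply Real.sqrt_le_sqrt
    calc ((lamt : ℝ) ^ r) ^ 2 ≤ (lam : ℝ) * ∑ j, (v j) ^ 2 := hcs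
      _ = (∑ j, (v j) ^ 2) * lam := by ring
  calc (lam : ℝ) ^ r ≤ ((r : ℝ) * lamt) ^ r := hkey
    _ = (lamt : ℝ) ^ r * (r : ℝ) ^ r := by ring
    _ = ((lamt : ℝ) ^ r / Real.sqrt lam) * Real.sqrt lam * (r : ℝ) ^ r := by
        field_simp
    _ ≤ Real.sqrt (∑ j, (v j) ^ 2) * (Real.sqrt lam * (r : ℝ) ^ r) := by
        rw [mul_assoc]
        exact mul_le_mul_of_nonneg_right h1 (by positivity)
end
end

section
/- Let r ≥ 1 and λ̃ ≥ 1 be integers, λ = rλ̃ − r + 1, and let v ∈ ℝ^λ be the ΣΔ condensation vector. For any positive integer p, set m = pλ, let V = I_p ⊗ v ∈ ℝ^{p×m}, and let D ∈ ℝ^{m×m} be the first-order difference matrix. Then for every u ∈ ℝ^m and every j ∈ {1,…,p}, the j-th entry of VD^r u satisfies |(VD^r u)_j| ≤ r·2^{3r−1}·‖u‖_∞; equivalently, ‖VD^r‖_{∞→∞} ≤ r·2^{3r−1}. -/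
open scoped BigOperators
noncomputable section

/-- The `∞ → ∞` operator norm `‖M‖_{∞→∞} = sup {‖Mx‖_∞ : ‖x‖_∞ ≤ 1}`. -/
def opNormInfInf {p m : ℕ} (M : Matrix (Fin p) (Fin m) ℝ) : ℝ :=
  sSup {c : ℝ | ∃ x : Fin m → ℝ, normInf x ≤ 1 ∧ c = normInf (M.mulVec x)}

lemma Gstep (a n x : ℕ) (g : Polynomial ℝ) :
    (if a ≤ x + n then g.coeff (x + n - a) else 0)
      - (if a ≤ x + 1 + n then g.coeff (x + 1 + n - a) else 0)
    = if a ≤ x + (n + 1) then ((Polynomial.X - 1) * g).coeff (x + (n + 1) - a) else 0 := by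
  have hco : ∀ k, ((Polynomial.X - 1 : Polynomial ℝ) * g).coeff k
      = (Polynomial.X * g).coeff k - g.coeff k := by
    intro k; rw [sub_mul, one_mul, Polynomial.coeff_sub]
  by_cases h1 : a ≤ x + n
  · have h2 : a ≤ x + (n + 1) := by omega
    have h3 : a ≤ x + 1 + n := by omega
    have he : x + (n + 1) - a = (x + n - a) + 1 := by omega
    have he2 : x + 1 + n - a = (x + n - a) + 1 := by omega
    rw [if_pos h1, if_pos h2, if_pos h3, hco, he, he2, Polynomial.coeff_X_mul]
  · by_cases h2 : a = x + n + 1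
    · have h3 : a ≤ x + 1 + n := by omega
      have h4 : x + 1 + n - a = 0 := by omega
      have h5 : a ≤ x + (n + 1) := by omega
      have h6 : x + (n + 1) - a = 0 := by omega
      rw [if_neg h1, if_pos h3, if_pos h5, h4, h6, hco]
      simp [Polynomial.mul_coeff_zero]
    · have h3 : ¬(a ≤ x + 1 + n) := by omega
      have h5 : ¬(a ≤ x + (n + 1)) := by omega
      rw [if_neg h1, if_neg h3, if_neg h5]
      ring

lemma coeffAbsSum (lamt r N : ℕ) :
    ∑ k ∈ Finset.range N, |((((Polynomial.X : Polynomial ℝ)) ^ lamt - 1) ^ r).coeff k|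
      ≤ (2 : ℝ) ^ r := by
  have hexp : (((Polynomial.X : Polynomial ℝ)) ^ lamt - 1) ^ r
      = ∑ q ∈ Finset.range (r+1),
          Polynomial.C ((-1 : ℝ) ^ (q + r) * (r.choose q : ℝ)) * Polynomial.X ^ (lamt * q) := by
    rw [sub_pow]
    refine Finset.sum_congr rfl fun q hq => ?_
    simp only [one_pow, mul_one, map_mul, map_pow, map_neg, map_one, Polynomial.C_eq_natCast,
      ← pow_mul]
    ring
  rw [hexp]
  have h1 : ∀ k ∈ Finset.range N,
      |(∑ q ∈ Finset.range (r+1),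
          Polynomial.C ((-1 : ℝ) ^ (q + r) * (r.choose q : ℝ)) * Polynomial.X ^ (lamt * q)).coeff k|
        ≤ ∑ q ∈ Finset.range (r+1),
            |(Polynomial.C ((-1 : ℝ) ^ (q + r) * (r.choose q : ℝ)) * Polynomial.X ^ (lamt * q)).coeff k| := by
    intro k _
    rw [Polynomial.finset_sum_coeff]
    exact Finset.abs_sum_le_sum_abs _ _
  calc ∑ k ∈ Finset.range N, |(∑ q ∈ Finset.range (r+1),
          Polynomial.C ((-1 : ℝ) ^ (q + r) * (r.choose q : ℝ)) * Polynomial.X ^ (lamt * q)).coeff k|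
      ≤ ∑ k ∈ Finset.range N, ∑ q ∈ Finset.range (r+1),
          |(Polynomial.C ((-1 : ℝ) ^ (q + r) * (r.choose q : ℝ)) * Polynomial.X ^ (lamt * q)).coeff k| :=
        Finset.sum_le_sum h1
    _ = ∑ q ∈ Finset.range (r+1), ∑ k ∈ Finset.range N,
          |(Polynomial.C ((-1 : ℝ) ^ (q + r) * (r.choose q : ℝ)) * Polynomial.X ^ (lamt * q)).coeff k| :=
        Finset.sum_comm
    _ ≤ ∑ q ∈ Finset.range (r+1), (r.choose q : ℝ) := by
        refine Finset.sum_le_sum fun q _ => ?_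
        have : ∀ k, |(Polynomial.C ((-1 : ℝ) ^ (q + r) * (r.choose q : ℝ)) * Polynomial.X ^ (lamt * q)).coeff k|
            = if k = lamt * q then (r.choose q : ℝ) else 0 := by
          intro k
          rw [Polynomial.coeff_C_mul, Polynomial.coeff_X_pow]
          by_cases h : k = lamt * q
          · simp [h, abs_mul, abs_pow]
          · simp [h]
        simp only [this]
        rw [Finset.sum_ite_eq']
        split <;> simp
    _ = (2 : ℝ) ^ r := by
        rw [← Nat.cast_sum, Nat.sum_range_choose]
        push_cast
        ring

/-- with `v` the ΣΔ condensation vector, `V = I_p ⊗ v` and `D` the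
first-order difference matrix, every entry of `V D^r u` is at most `r·2^{3r-1}·‖u‖_∞`
in absolute value; equivalently `‖V D^r‖_{∞→∞} ≤ r·2^{3r-1}`. -/
theorem stmt3 (r lamt : ℕ) (hr : 1 ≤ r) (hlamt : 1 ≤ lamt)
    (lam : ℕ) (hlam : lam = r * lamt - r + 1) (p : ℕ) (hp : 0 < p)
    (v : Fin lam → ℝ) (hv : v = sdVec r lamt)
    (V : Matrix (Fin p) (Fin (p * lam)) ℝ) (hV : V = kronRow p v) :
    (∀ (u : Fin (p * lam) → ℝ) (j : Fin p),
        |((V * (diffMat (p * lam)) ^ r).mulVec u) j|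
          ≤ (r : ℝ) * 2 ^ (3 * r - 1) * normInf u) ∧
    opNormInfInf (V * (diffMat (p * lam)) ^ r) ≤ (r : ℝ) * 2 ^ (3 * r - 1) := by
  have hlam1 : 1 ≤ lam := by omega
  have hm : 0 < p * lam := Nat.mul_pos hp hlam1
  set P : Polynomial ℝ := (∑ t ∈ Finset.range lamt, (Polynomial.X : Polynomial ℝ) ^ t) ^ r with hP
  have hkey : r * (lamt - 1) + 1 = lam := by
    obtain ⟨s, rfl⟩ := Nat.exists_eq_add_of_le hlamt
    rw [Nat.mul_add] at hlam
    simp only [Nat.add_sub_cancel_left, mul_one] at *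
    generalize r * s = t at *
    omega
  have hPdeg : P.natDegree ≤ lam - 1 := by
    have h1 : (∑ t ∈ Finset.range lamt, (Polynomial.X : Polynomial ℝ) ^ t).natDegree ≤ lamt - 1 := by
      refine Polynomial.natDegree_sum_le_of_forall_le _ _ fun i hi => ?_
      simpa using Nat.le_pred_of_lt (Finset.mem_range.mp hi)
    calc P.natDegree ≤ r * (∑ t ∈ Finset.range lamt, (Polynomial.X : Polynomial ℝ) ^ t).natDegree :=
          Polynomial.natDegree_pow_le
      _ ≤ r * (lamt - 1) := Nat.mul_le_mul_left _ h1
      _ ≤ lam - 1 := by omega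
  have hgdeg : ∀ n : ℕ, (((Polynomial.X - 1 : Polynomial ℝ)) ^ n * P).natDegree ≤ n + (lam - 1) := by
    intro n
    refine Polynomial.natDegree_mul_le.trans (add_le_add ?_ hPdeg)
    refine Polynomial.natDegree_pow_le.trans ?_
    have : (Polynomial.X - 1 : Polynomial ℝ).natDegree = 1 := by
      rw [← Polynomial.C_1]; exact Polynomial.natDegree_X_sub_C 1
    simp [this]
  have hblock : ∀ j : Fin p, (j : ℕ) * lam + lam ≤ p * lam := by
    intro j
    have h1 : ((j : ℕ) + 1) * lam ≤ p * lam := Nat.mul_le_mul_right _ (by omega)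
    have h2 := Nat.add_mul (j : ℕ) 1 lam
    omega
  -- the row formula
  have hrow : ∀ (j : Fin p) (n : ℕ) (l : Fin (p * lam)),
      (V * (diffMat (p * lam)) ^ n) j l
        = if (j : ℕ) * lam ≤ (l : ℕ) + n
          then (((Polynomial.X - 1 : Polynomial ℝ)) ^ n * P).coeff ((l : ℕ) + n - (j : ℕ) * lam)
          else 0 := by
    intro j n
    induction n with
    | zero =>
      intro l
      simp only [pow_zero, Matrix.mul_one, add_zero, one_mul]
      rw [hV, hv]
      show (if (l : ℕ) / lam = (j : ℕ) then
          (if h2 : (l : ℕ) % lam < lam then sdVec r lamt ⟨(l : ℕ) % lam, h2⟩ else 0) else 0) = _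
      by_cases hc : (l : ℕ) / lam = (j : ℕ)
      · have hle : (j : ℕ) * lam ≤ (l : ℕ) := by
          rw [← hc]; exact Nat.div_mul_le_self _ _
        have h3 := Nat.mod_add_div (l : ℕ) lam
        have h4 : lam * ((l : ℕ) / lam) = (j : ℕ) * lam := by rw [hc, mul_comm]
        have hmod : (l : ℕ) % lam = (l : ℕ) - (j : ℕ) * lam := by omega
        have h2 : (l : ℕ) % lam < lam := Nat.mod_lt _ hlam1
        simp only [hc, if_true, dif_pos h2, hle, sdVec, hP, hmod]
      · by_cases hle : (j : ℕ) * lam ≤ (l : ℕ)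
        · have hdiv : (j : ℕ) + 1 ≤ (l : ℕ) / lam := by
            have : (j : ℕ) ≤ (l : ℕ) / lam := (Nat.le_div_iff_mul_le hlam1).mpr hle
            omega
          have hge : lam ≤ (l : ℕ) - (j : ℕ) * lam := by
            have h4 : ((j : ℕ) + 1) * lam ≤ ((l : ℕ) / lam) * lam := Nat.mul_le_mul_right _ hdiv
            have h5 : ((l : ℕ) / lam) * lam ≤ (l : ℕ) := Nat.div_mul_le_self _ _
            have := Nat.add_mul (j : ℕ) 1 lam
            omega
          have hz : P.coeff ((l : ℕ) - (j : ℕ) * lam) = 0 := by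
            refine Polynomial.coeff_eq_zero_of_natDegree_lt ?_
            omega
          simp [hc, hle, hz]
        · simp [hc, hle]
    | succ n ih =>
      intro l
      rw [pow_succ, ← Matrix.mul_assoc, Matrix.mul_apply]
      have hD : ∀ k : Fin (p * lam), diffMat (p * lam) k l
          = (if k = l then (1 : ℝ) else 0) + (if (k : ℕ) = (l : ℕ) + 1 then -1 else 0) := by
        intro k
        by_cases h1 : (k : ℕ) = (l : ℕ)
        · have h2 : ¬((k : ℕ) = (l : ℕ) + 1) := by omega
          simp [diffMat, h1, h2, Fin.ext_iff]
        · simp [diffMat, h1, Fin.ext_iff]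
      have hsum : ∑ k : Fin (p * lam), (V * (diffMat (p * lam)) ^ n) j k * diffMat (p * lam) k l
          = (if (j : ℕ) * lam ≤ (l : ℕ) + n
              then (((Polynomial.X - 1 : Polynomial ℝ)) ^ n * P).coeff ((l : ℕ) + n - (j : ℕ) * lam)
              else 0)
            - (if (j : ℕ) * lam ≤ (l : ℕ) + 1 + n
              then (((Polynomial.X - 1 : Polynomial ℝ)) ^ n * P).coeff ((l : ℕ) + 1 + n - (j : ℕ) * lam)
              else 0) := by
        simp only [ih, hD, mul_add, Finset.sum_add_distrib]
        congr 1
        · simp [mul_ite, Finset.sum_ite_eq']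
        · by_cases hl : (l : ℕ) + 1 < p * lam
          · have hk : ∀ k : Fin (p * lam), ((k : ℕ) = (l : ℕ) + 1) ↔ k = ⟨(l : ℕ) + 1, hl⟩ := by
              intro k; rw [Fin.ext_iff]
            simp only [hk]
            simp [mul_ite, Finset.sum_ite_eq']
          · have hlm : (l : ℕ) + 1 = p * lam := by
              have := l.isLt; omega
            have hz : (((Polynomial.X - 1 : Polynomial ℝ)) ^ n * P).coeff
                ((l : ℕ) + 1 + n - (j : ℕ) * lam) = 0 := by
              refine Polynomial.coeff_eq_zero_of_natDegree_lt (lt_of_le_of_lt (hgdeg n) ?_)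
              have := hblock j
              omega
            have hnk : ∀ k : Fin (p * lam), ¬((k : ℕ) = (l : ℕ) + 1) := by
              intro k; have := k.isLt; omega
            simp [hnk, hz]
      rw [hsum]
      have hpow : ((Polynomial.X - 1 : Polynomial ℝ)) ^ (n + 1) * P
          = (Polynomial.X - 1 : Polynomial ℝ) * (((Polynomial.X - 1 : Polynomial ℝ)) ^ n * P) := by
        rw [pow_succ]; ring
      rw [hpow]
      exact Gstep _ n (l : ℕ) _
  have hQ : ((Polynomial.X - 1 : Polynomial ℝ)) ^ r * P
      = ((Polynomial.X : Polynomial ℝ) ^ lamt - 1) ^ r := by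
    rw [hP, ← mul_pow, mul_comm, geom_sum_mul]
  have habs : ∀ {n : ℕ} (x : Fin n → ℝ) (i : Fin n), |x i| ≤ normInf x := by
    intro n x i
    exact le_ciSup (f := fun j => |x j|) (Set.Finite.bddAbove (Set.finite_range _)) i
  have hInf0 : ∀ x : Fin (p * lam) → ℝ, 0 ≤ normInf x := by
    intro x
    exact le_trans (abs_nonneg _) (habs x ⟨0, hm⟩)
  have hl1 : ∀ j : Fin p,
      ∑ l : Fin (p * lam), |(V * (diffMat (p * lam)) ^ r) j l| ≤ (2 : ℝ) ^ r := by
    intro j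
    calc ∑ l : Fin (p * lam), |(V * (diffMat (p * lam)) ^ r) j l|
        = ∑ l : Fin (p * lam), (if (j : ℕ) * lam ≤ (l : ℕ) + r
            then |(((Polynomial.X : Polynomial ℝ) ^ lamt - 1) ^ r).coeff ((l : ℕ) + r - (j : ℕ) * lam)|
            else 0) := by
          refine Finset.sum_congr rfl fun l _ => ?_
          rw [hrow j r l, hQ]
          split <;> simp
      _ = ∑ l ∈ Finset.range (p * lam), (if (j : ℕ) * lam ≤ l + r
            then |(((Polynomial.X : Polynomial ℝ) ^ lamt - 1) ^ r).coeff (l + r - (j : ℕ) * lam)|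
            else 0) := by
          rw [← Fin.sum_univ_eq_sum_range]
      _ = ∑ l ∈ (Finset.range (p * lam)).filter (fun l => (j : ℕ) * lam ≤ l + r),
            |(((Polynomial.X : Polynomial ℝ) ^ lamt - 1) ^ r).coeff (l + r - (j : ℕ) * lam)| := by
          rw [Finset.sum_filter]
      _ = ∑ k ∈ ((Finset.range (p * lam)).filter (fun l => (j : ℕ) * lam ≤ l + r)).image
            (fun l => l + r - (j : ℕ) * lam),
            |(((Polynomial.X : Polynomial ℝ) ^ lamt - 1) ^ r).coeff k| := by
          refine (Finset.sum_image (g := fun l => l + r - (j : ℕ) * lam)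
            (f := fun k => |(((Polynomial.X : Polynomial ℝ) ^ lamt - 1) ^ r).coeff k|) ?_).symm
          intro x hx y hy hxy
          simp only [Finset.coe_filter, Finset.mem_coe, Finset.mem_filter, Set.mem_setOf_eq, Finset.mem_range] at hx hy
          have hxy' : x + r - (j : ℕ) * lam = y + r - (j : ℕ) * lam := hxy
          omega
      _ ≤ ∑ k ∈ Finset.range (p * lam + r),
            |(((Polynomial.X : Polynomial ℝ) ^ lamt - 1) ^ r).coeff k| := by
          refine Finset.sum_le_sum_of_subset_of_nonneg ?_ (fun _ _ _ => abs_nonneg _)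
          intro k hk
          simp only [Finset.mem_image, Finset.mem_filter, Finset.mem_range] at hk ⊢
          obtain ⟨x, ⟨hx1, hx2⟩, rfl⟩ := hk
          omega
      _ ≤ (2 : ℝ) ^ r := coeffAbsSum lamt r _
  have hB : (2 : ℝ) ^ r ≤ (r : ℝ) * 2 ^ (3 * r - 1) := by
    have h1 : (2 : ℝ) ^ r ≤ 2 ^ (3 * r - 1) := pow_le_pow_right₀ one_le_two (by omega)
    have h2 : (1 : ℝ) ≤ (r : ℝ) := by exact_mod_cast hr
    nlinarith [pow_nonneg (by norm_num : (0:ℝ) ≤ 2) (3 * r - 1)]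
  have hentry : ∀ (u : Fin (p * lam) → ℝ) (j : Fin p),
      |((V * (diffMat (p * lam)) ^ r).mulVec u) j| ≤ (r : ℝ) * 2 ^ (3 * r - 1) * normInf u := by
    intro u j
    have e1 : ((V * (diffMat (p * lam)) ^ r).mulVec u) j
        = ∑ k : Fin (p * lam), (V * (diffMat (p * lam)) ^ r) j k * u k := by
      simp [Matrix.mulVec, dotProduct]
    rw [e1]
    calc |∑ k : Fin (p * lam), (V * (diffMat (p * lam)) ^ r) j k * u k|
        ≤ ∑ k : Fin (p * lam), |(V * (diffMat (p * lam)) ^ r) j k * u k| :=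
          Finset.abs_sum_le_sum_abs _ _
      _ ≤ ∑ k : Fin (p * lam), |(V * (diffMat (p * lam)) ^ r) j k| * normInf u := by
          refine Finset.sum_le_sum fun k _ => ?_
          rw [abs_mul]
          exact mul_le_mul_of_nonneg_left (habs u k) (abs_nonneg _)
      _ = (∑ k : Fin (p * lam), |(V * (diffMat (p * lam)) ^ r) j k|) * normInf u :=
          (Finset.sum_mul _ _ _).symm
      _ ≤ (2 : ℝ) ^ r * normInf u := mul_le_mul_of_nonneg_right (hl1 j) (hInf0 u)
      _ ≤ (r : ℝ) * 2 ^ (3 * r - 1) * normInf u := mul_le_mul_of_nonneg_right hB (hInf0 u)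
  refine ⟨hentry, ?_⟩
  have hpos : (0 : ℝ) ≤ (r : ℝ) * 2 ^ (3 * r - 1) := by positivity
  refine Real.sSup_le ?_ hpos
  rintro c ⟨x, hx1, rfl⟩
  haveI : Nonempty (Fin p) := Fin.pos_iff_nonempty.mp hp
  refine ciSup_le fun j => ?_
  calc |((V * (diffMat (p * lam)) ^ r).mulVec x) j|
      ≤ (r : ℝ) * 2 ^ (3 * r - 1) * normInf x := hentry x j
    _ ≤ (r : ℝ) * 2 ^ (3 * r - 1) * 1 := mul_le_mul_of_nonneg_left hx1 hpos
    _ = (r : ℝ) * 2 ^ (3 * r - 1) := mul_one _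
end
end
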